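/- For all natural numbers n, k and every natural number m ≥ 1: S^{c,d}_{s,q}[n+m, k] = Σ_{r=0}^{n} Σ_{j=0}^{m} S^{c,d}_{s,q}[m,j] · q^{(d + mc + (m−j)(s−1))(k−j)} · binom(r, k−j)_{q^{s−1}} · S^{c,0}_{s,q}[n,r] · Π_{i=0}^{r−k+j−1} [d + mc + (m−j)(s−1) + i·(s−1)]_q, where binom(r, k−j) is interpreted as 0 when j > k and the exponent k − j is computed in ℤ. -/
import Mathlib


/-- The `q`-bracket `[t]_q = (q^t - 1)/(q - 1)` (real exponentiation). -/
noncomputable def qBracket (q t : ℝ) : ℝ := (q ^ t - 1) / (q - 1)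

open Classical in
/-- The `Q`-binomial coefficient: the sum of `Q^(t₁+⋯+t_{n-k})` over all weakly
increasing integer tuples `0 ≤ t₁ ≤ ⋯ ≤ t_{n-k} ≤ k` when `k ≤ n`, and `0` when `k > n`. -/
noncomputable def qBinom (Q : ℝ) (n k : ℕ) : ℝ :=
  if k ≤ n then
    ∑ f ∈ Finset.univ.filter (fun f : Fin (n - k) → Fin (k + 1) => Monotone f),
      Q ^ (∑ i, (f i : ℕ))
  else 0

/-- The generalized `q`-Stirling numbers `S^{c,d}_{s,q}[n,k]`. -/
noncomputable def genStirlingCD (c d s q : ℝ) : ℕ → ℕ → ℝ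
  | 0, 0 => 1
  | 0, _ + 1 => 0
  | _ + 1, 0 => 0
  | n + 1, k + 1 =>
    if k + 1 ≤ n + 1 then
      q ^ (c * (n : ℝ) + d + ((n : ℝ) - (k : ℝ)) * (s - 1)) * genStirlingCD c d s q n k
        + qBracket q (c * (n : ℝ) + d + ((n : ℝ) - (k : ℝ) - 1) * (s - 1)) *
            genStirlingCD c d s q n (k + 1)
    else 0

lemma qBracket_zero (q : ℝ) : qBracket q 0 = 0 := by
  simp [qBracket]

lemma qBracket_add (q : ℝ) (hq : 0 < q) (a b : ℝ) :
    qBracket q (a + b) = qBracket q a + q ^ a * qBracket q b := by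
  unfold qBracket
  rw [Real.rpow_add hq]
  ring

lemma qBinom_zero_right (Q : ℝ) (n : ℕ) : qBinom Q n 0 = 1 := by
  unfold qBinom
  rw [if_pos (Nat.zero_le n)]
  have h : ∀ f : Fin (n - 0) → Fin (0 + 1), Monotone f := by
    intro f a b _
    have : ∀ x : Fin (0+1), x = 0 := fun x => Fin.ext (by omega)
    rw [this (f a), this (f b)]
  rw [Finset.filter_true_of_mem (fun f _ => h f)]
  have : ∀ f : Fin (n - 0) → Fin (0 + 1), (∑ i, ((f i : ℕ))) = 0 := by
    intro f
    simp [Fin.val_eq_zero]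
  rw [Finset.sum_congr rfl (fun f _ => by rw [this f, pow_zero])]
  simp

lemma qBinom_eq_zero (Q : ℝ) {n k : ℕ} (h : n < k) : qBinom Q n k = 0 := by
  unfold qBinom
  rw [if_neg (by omega)]

lemma qBinom_self (Q : ℝ) (n : ℕ) : qBinom Q n n = 1 := by
  unfold qBinom
  rw [if_pos le_rfl]
  have h : ∀ f : Fin (n - n) → Fin (n + 1), Monotone f := by
    intro f a b _
    exact absurd a.isLt (by omega)
  rw [Finset.filter_true_of_mem (fun f _ => h f)]
  have he : (Finset.univ : Finset (Fin (n - n) → Fin (n+1))) = {fun i => absurd i.isLt (by omega)} := by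
    apply Finset.eq_singleton_iff_unique_mem.mpr
    constructor
    · exact Finset.mem_univ _
    · intro f _
      funext i
      exact absurd i.isLt (by omega)
  rw [he, Finset.sum_singleton]
  have : (∑ i : Fin (n - n), ((absurd i.isLt (by omega : ¬ (i : ℕ) < n - n) : Fin (n+1) ) : ℕ)) = 0 := by
    apply Finset.sum_eq_zero
    intro i _
    exact absurd i.isLt (by omega)
  rw [this, pow_zero]

open Finset in
lemma qBinom_helper (Q : ℝ) (L c : ℕ) :
    ∑ f ∈ univ.filter (fun f : Fin (L+1) → Fin (c+2) => Monotone f), Q ^ (∑ i, (f i : ℕ))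
    = (∑ f ∈ univ.filter (fun f : Fin L → Fin (c+2) => Monotone f), Q ^ (∑ i, (f i : ℕ)))
    + Q^(L+1) * ∑ f ∈ univ.filter (fun f : Fin (L+1) → Fin (c+1) => Monotone f), Q ^ (∑ i, (f i : ℕ)) := by
  classical
  rw [← Finset.sum_filter_add_sum_filter_not
    (univ.filter (fun f : Fin (L+1) → Fin (c+2) => Monotone f)) (fun f => f 0 = 0)]
  congr 1
  · -- f 0 = 0 part
    apply Finset.sum_nbij' (i := fun f => f ∘ Fin.succ) (j := fun g => Fin.cases 0 g)
    · intro f hf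
      simp only [mem_filter, mem_univ, true_and] at hf ⊢
      exact hf.1.comp (Fin.strictMono_succ).monotone
    · intro g hg
      simp only [mem_filter, mem_univ, true_and] at hg ⊢
      constructor
      · intro a b hab
        induction a using Fin.cases with
        | zero =>
          induction b using Fin.cases with
          | zero => exact le_rfl
          | succ b => exact Fin.zero_le _
        | succ a =>
          induction b using Fin.cases with
          | zero => exact absurd (Fin.le_zero_iff.mp hab) (Fin.succ_ne_zero a)
          | succ b =>
            simp only [Fin.cases_succ]
            exact hg (Fin.succ_le_succ_iff.mp hab)
      · simp
    · intro f hf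
      simp only [mem_filter, mem_univ, true_and] at hf
      funext a
      induction a using Fin.cases with
      | zero => exact hf.2.symm
      | succ a => simp
    · intro g hg
      funext a
      simp
    · intro f hf
      simp only [mem_filter, mem_univ, true_and] at hf
      congr 1
      rw [Fin.sum_univ_succ, hf.2]
      simp
  · -- f 0 ≠ 0 part
    rw [Finset.mul_sum]
    apply Finset.sum_nbij'
      (i := fun f k => (⟨(f k : ℕ) - 1, by have := (f k).isLt; omega⟩ : Fin (c+1)))
      (j := fun g k => Fin.succ (g k))
    · intro f hf
      simp only [mem_filter, mem_univ, true_and] at hf ⊢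
      intro a b hab
      simp only [Fin.mk_le_mk]
      exact Nat.sub_le_sub_right (hf.1 hab) 1
    · intro g hg
      simp only [mem_filter, mem_univ, true_and] at hg ⊢
      refine ⟨fun a b hab => Fin.succ_le_succ_iff.mpr (hg hab), ?_⟩
      exact Fin.succ_ne_zero _
    · intro f hf
      simp only [mem_filter, mem_univ, true_and] at hf
      have hpos : ∀ k, 1 ≤ (f k : ℕ) := by
        intro k
        have h0 : f 0 ≤ f k := hf.1 (Fin.zero_le k)
        have : (f 0 : ℕ) ≠ 0 := fun h => hf.2 (Fin.ext h)
        have := (Fin.le_def.mp h0)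
        omega
      funext k
      apply Fin.ext
      simp only [Fin.val_succ]
      have := hpos k
      omega
    · intro g hg
      funext k
      apply Fin.ext
      simp [Fin.val_succ]
    · intro f hf
      simp only [mem_filter, mem_univ, true_and] at hf
      have hpos : ∀ k, 1 ≤ (f k : ℕ) := by
        intro k
        have h0 : f 0 ≤ f k := hf.1 (Fin.zero_le k)
        have : (f 0 : ℕ) ≠ 0 := fun h => hf.2 (Fin.ext h)
        have := (Fin.le_def.mp h0)
        omega
      rw [← pow_add]
      congr 1
      have h1 : ∑ i : Fin (L+1), ((f i : ℕ) - 1 + 1) = ∑ i : Fin (L+1), (f i : ℕ) := by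
        apply Finset.sum_congr rfl
        intro i _
        have := hpos i
        omega
      rw [Finset.sum_add_distrib] at h1
      simp only [Finset.sum_const, Finset.card_univ, Fintype.card_fin, smul_eq_mul, mul_one] at h1
      simp only [Fin.val_mk]
      omega

lemma qBinom_pascal (Q : ℝ) (n t : ℕ) :
    qBinom Q (n+1) (t+1) = Q ^ (n - t) * qBinom Q n t + qBinom Q n (t+1) := by
  rcases lt_trichotomy t n with h | h | h
  · obtain ⟨L, rfl⟩ : ∃ L, n = L + t + 1 := ⟨n - t - 1, by omega⟩
    unfold qBinom
    rw [if_pos (by omega), if_pos (by omega), if_pos (by omega)]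
    rw [show L + t + 1 + 1 - (t + 1) = L + 1 from by omega,
        show L + t + 1 - t = L + 1 from by omega,
        show L + t + 1 - (t + 1) = L from by omega]
    have := qBinom_helper Q L t
    rw [show t + 2 = t + 1 + 1 from rfl] at this
    rw [this]
    ring
  · subst h
    rw [qBinom_self, qBinom_self, qBinom_eq_zero Q (by omega), Nat.sub_self, pow_zero]
    ring
  · rw [qBinom_eq_zero Q (by omega), qBinom_eq_zero Q (by omega), qBinom_eq_zero Q (by omega)]
    ring

lemma gen_eq_zero (c d s q : ℝ) : ∀ {n k : ℕ}, n < k → genStirlingCD c d s q n k = 0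
  | 0, k+1, _ => rfl
  | n+1, k+1, h => by
    rw [genStirlingCD, if_neg (by omega)]

lemma gen_zero_left (c d s q : ℝ) (n : ℕ) : genStirlingCD c d s q (n+1) 0 = 0 := rfl

lemma gen_succ (c d s q : ℝ) (n k : ℕ) :
    genStirlingCD c d s q (n+1) (k+1)
    = q ^ (c * (n : ℝ) + d + ((n : ℝ) - (k : ℝ)) * (s - 1)) * genStirlingCD c d s q n k
        + qBracket q (c * (n : ℝ) + d + ((n : ℝ) - (k : ℝ) - 1) * (s - 1)) *
            genStirlingCD c d s q n (k + 1) := by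
  rw [genStirlingCD]
  by_cases h : k + 1 ≤ n + 1
  · rw [if_pos h]
  · rw [if_neg h,
      gen_eq_zero c d s q (show n < k from by omega),
      gen_eq_zero c d s q (show n < k + 1 from by omega)]
    ring

noncomputable def Cterm (q s c d : ℝ) (m k r j : ℕ) : ℝ :=
  genStirlingCD c d s q m j *
    q ^ ((d + (m:ℝ)*c + ((m:ℝ)-(j:ℝ))*(s-1)) * ((k:ℝ)-(j:ℝ))) *
    (if j ≤ k then qBinom (q^(s-1)) r (k-j) else 0) *
    ∏ i ∈ Finset.range (r + j - k),
      qBracket q (d + (m:ℝ)*c + ((m:ℝ)-(j:ℝ))*(s-1) + (i:ℝ)*(s-1))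

lemma key_term (q s c d : ℝ) (hq : 0 < q) (m n r j k' : ℕ) :
    Cterm q s c d m (k'+1) (r+1) j * q ^ (c*(n:ℝ) + ((n:ℝ)-(r:ℝ))*(s-1))
      + Cterm q s c d m (k'+1) r j * qBracket q (c*(n:ℝ) + ((n:ℝ)-(r:ℝ))*(s-1))
    = q ^ (c*((n:ℝ)+(m:ℝ)) + d + (((n:ℝ)+(m:ℝ))-(k':ℝ))*(s-1)) * Cterm q s c d m k' r j
      + qBracket q (c*((n:ℝ)+(m:ℝ)) + d + (((n:ℝ)+(m:ℝ))-(k':ℝ)-1)*(s-1))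
          * Cterm q s c d m (k'+1) r j := by
  by_cases hjk : j ≤ k' + 1
  · by_cases hj' : j = k' + 1
    · -- j = k case
      subst hj'
      simp only [Cterm, if_pos (le_refl (k'+1)),
        if_neg (show ¬ (k'+1 ≤ k') from by omega)]
      rw [show (k'+1) - (k'+1) = 0 from by omega]
      simp only [qBinom_zero_right]
      rw [show r + 1 + (k'+1) - (k'+1) = r + 1 from by omega,
        show r + (k'+1) - (k'+1) = r from by omega,
        Finset.prod_range_succ]
      rw [sub_self, mul_zero, Real.rpow_zero]
      have hF : c*((n:ℝ)+(m:ℝ)) + d + (((n:ℝ)+(m:ℝ))-(k':ℝ)-1)*(s-1)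
          = (c*(n:ℝ) + ((n:ℝ)-(r:ℝ))*(s-1))
            + ((d + (m:ℝ)*c + ((m:ℝ)-((k'+1:ℕ):ℝ))*(s-1)) + (r:ℝ)*(s-1)) := by
        push_cast; ring
      have hFs : qBracket q (c*((n:ℝ)+(m:ℝ)) + d + (((n:ℝ)+(m:ℝ))-(k':ℝ)-1)*(s-1))
          = qBracket q (c*(n:ℝ) + ((n:ℝ)-(r:ℝ))*(s-1))
            + q ^ (c*(n:ℝ) + ((n:ℝ)-(r:ℝ))*(s-1))
              * qBracket q ((d + (m:ℝ)*c + ((m:ℝ)-((k'+1:ℕ):ℝ))*(s-1)) + (r:ℝ)*(s-1)) := by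
        rw [hF]; exact qBracket_add q hq _ _
      rw [hFs]
      ring
    · -- j ≤ k'
      have hj : j ≤ k' := by omega
      obtain ⟨t', rfl⟩ : ∃ t', k' = j + t' := ⟨k' - j, by omega⟩
      simp only [Cterm, if_pos hjk, if_pos hj,
        show j + t' + 1 - j = t' + 1 from by omega,
        show j + t' - j = t' from by omega]
      rcases lt_trichotomy r t' with hr | hr | hr
      · -- all binomials vanish
        rw [qBinom_eq_zero _ (show r + 1 < t' + 1 from by omega),
          qBinom_eq_zero _ (show r < t' + 1 from by omega),
          qBinom_eq_zero _ (show r < t' from by omega)]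
        ring
      · -- r = t'
        subst hr
        rw [qBinom_pascal, qBinom_eq_zero _ (show r < r + 1 from by omega),
          Nat.sub_self, pow_zero,
          show r + 1 + j - (j + r + 1) = 0 from by omega,
          show r + j - (j + r + 1) = 0 from by omega,
          show r + j - (j + r) = 0 from by omega]
        simp only [Finset.range_zero, Finset.prod_empty]
        have hexp : q ^ ((d + (m:ℝ)*c + ((m:ℝ)-(j:ℝ))*(s-1)) * ((((j + r + 1 :ℕ)):ℝ)-(j:ℝ)))
              * q ^ (c*(n:ℝ) + ((n:ℝ)-(r:ℝ))*(s-1))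
            = q ^ (c*((n:ℝ)+(m:ℝ)) + d + (((n:ℝ)+(m:ℝ))-(((j + r:ℕ)):ℝ))*(s-1))
              * q ^ ((d + (m:ℝ)*c + ((m:ℝ)-(j:ℝ))*(s-1)) * ((((j + r:ℕ)):ℝ)-(j:ℝ))) := by
          rw [← Real.rpow_add hq, ← Real.rpow_add hq]
          congr 1
          push_cast
          ring
        linear_combination (genStirlingCD c d s q m j * qBinom (q^(s-1)) r r) * hexp
      · -- r > t'
        obtain ⟨u, rfl⟩ : ∃ u, r = u + t' + 1 := ⟨r - t' - 1, by omega⟩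
        rw [qBinom_pascal,
          show u + t' + 1 - t' = u + 1 from by omega,
          show u + t' + 1 + 1 + j - (j + t' + 1) = u + 1 from by omega,
          show u + t' + 1 + j - (j + t' + 1) = u from by omega,
          show u + t' + 1 + j - (j + t') = u + 1 from by omega,
          Finset.prod_range_succ]
        have hF : c*((n:ℝ)+(m:ℝ)) + d + (((n:ℝ)+(m:ℝ))-(((j + t':ℕ)):ℝ)-1)*(s-1)
            = (c*(n:ℝ) + ((n:ℝ)-(((u + t' + 1:ℕ)):ℝ))*(s-1))
              + ((d + (m:ℝ)*c + ((m:ℝ)-(j:ℝ))*(s-1)) + (u:ℝ)*(s-1)) := by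
          push_cast; ring
        have hFs : qBracket q (c*((n:ℝ)+(m:ℝ)) + d + (((n:ℝ)+(m:ℝ))-(((j + t':ℕ)):ℝ)-1)*(s-1))
            = qBracket q (c*(n:ℝ) + ((n:ℝ)-(((u + t' + 1:ℕ)):ℝ))*(s-1))
              + q ^ (c*(n:ℝ) + ((n:ℝ)-(((u + t' + 1:ℕ)):ℝ))*(s-1))
                * qBracket q ((d + (m:ℝ)*c + ((m:ℝ)-(j:ℝ))*(s-1)) + (u:ℝ)*(s-1)) := by
          rw [hF]; exact qBracket_add q hq _ _
        rw [hFs]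
        have hexp : q ^ ((d + (m:ℝ)*c + ((m:ℝ)-(j:ℝ))*(s-1)) * ((((j + t' + 1:ℕ)):ℝ)-(j:ℝ)))
              * (q^(s-1)) ^ (u+1)
              * q ^ (c*(n:ℝ) + ((n:ℝ)-(((u + t' + 1:ℕ)):ℝ))*(s-1))
            = q ^ (c*((n:ℝ)+(m:ℝ)) + d + (((n:ℝ)+(m:ℝ))-(((j + t':ℕ)):ℝ))*(s-1))
              * q ^ ((d + (m:ℝ)*c + ((m:ℝ)-(j:ℝ))*(s-1)) * ((((j + t':ℕ)):ℝ)-(j:ℝ))) := by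
          rw [← Real.rpow_natCast (q^(s-1)) (u+1), ← Real.rpow_mul hq.le,
            ← Real.rpow_add hq, ← Real.rpow_add hq, ← Real.rpow_add hq]
          congr 1
          push_cast
          ring
        linear_combination (genStirlingCD c d s q m j * qBinom (q^(s-1)) (u+t'+1) t'
          * (∏ i ∈ Finset.range u,
              qBracket q (d + (m:ℝ)*c + ((m:ℝ)-(j:ℝ))*(s-1) + (i:ℝ)*(s-1)))
          * qBracket q (d + (m:ℝ)*c + ((m:ℝ)-(j:ℝ))*(s-1) + (u:ℝ)*(s-1))) * hexp
  · -- j > k'+1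
    simp only [Cterm, if_neg hjk, if_neg (show ¬ (j ≤ k') from by omega)]
    ring

lemma abel_step (q s c : ℝ) (n : ℕ) (a : ℕ → ℝ) :
    ∑ r ∈ Finset.range (n+2), a r * genStirlingCD c 0 s q (n+1) r
    = ∑ r ∈ Finset.range (n+1),
        (a (r+1) * q ^ (c*(n:ℝ) + ((n:ℝ)-(r:ℝ))*(s-1))
          + a r * qBracket q (c*(n:ℝ) + ((n:ℝ)-(r:ℝ))*(s-1))) * genStirlingCD c 0 s q n r := by
  set w : ℕ → ℝ := fun r => a r * qBracket q (c*(n:ℝ) + ((n:ℝ)-(r:ℝ))*(s-1)) * genStirlingCD c 0 s q n r with hw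
  have hw0 : w 0 = 0 := by
    cases n with
    | zero =>
      have h0 : c*((0:ℕ):ℝ) + (((0:ℕ):ℝ)-((0:ℕ):ℝ))*(s-1) = 0 := by push_cast; ring
      simp only [hw, h0, qBracket_zero, mul_zero, zero_mul]
    | succ n'' => simp only [hw, gen_zero_left, mul_zero]
  have hwn : w (n+1) = 0 := by
    simp only [hw, gen_eq_zero c 0 s q (show n < n + 1 from by omega), mul_zero]
  rw [Finset.sum_range_succ']
  rw [gen_zero_left, mul_zero, add_zero]
  have hterm : ∀ r ∈ Finset.range (n+1),
      a (r+1) * genStirlingCD c 0 s q (n+1) (r+1)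
      = a (r+1) * q ^ (c*(n:ℝ) + ((n:ℝ)-(r:ℝ))*(s-1)) * genStirlingCD c 0 s q n r
        + w (r+1) := by
    intro r _
    rw [gen_succ]
    have e1 : c * (n:ℝ) + 0 + ((n:ℝ) - (r:ℝ)) * (s-1) = c*(n:ℝ) + ((n:ℝ)-(r:ℝ))*(s-1) := by ring
    have e2 : c * (n:ℝ) + 0 + ((n:ℝ) - (r:ℝ) - 1) * (s-1)
        = c*(n:ℝ) + ((n:ℝ)-((r+1:ℕ):ℝ))*(s-1) := by push_cast; ring
    rw [e1, e2, hw]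
    ring
  rw [Finset.sum_congr rfl hterm, Finset.sum_add_distrib]
  have hshift : ∑ r ∈ Finset.range (n+1), w (r+1) = ∑ r ∈ Finset.range (n+1), w r := by
    have e1 := Finset.sum_range_succ' w (n+1)
    have e2 := Finset.sum_range_succ w (n+1)
    rw [hw0] at e1
    rw [hwn] at e2
    rw [add_zero] at e1 e2
    rw [← e1, e2]
  rw [hshift, ← Finset.sum_add_distrib]
  apply Finset.sum_congr rfl
  intro r _
  rw [hw]
  ring

theorem aux_spivey (q s c d : ℝ) (hq : 0 < q) (hq1 : q ≠ 1) (m : ℕ) (hm : 1 ≤ m) (n k : ℕ) :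
    genStirlingCD c d s q (n+m) k
    = ∑ r ∈ Finset.range (n+1),
        (∑ j ∈ Finset.range (m+1), Cterm q s c d m k r j) * genStirlingCD c 0 s q n r := by
  induction n generalizing k with
  | zero =>
    rw [Finset.sum_range_one, Nat.zero_add]
    have hdiag : ∀ j ∈ Finset.range (m+1),
        Cterm q s c d m k 0 j = if j = k then genStirlingCD c d s q m k else 0 := by
      intro j _
      by_cases hjk : j ≤ k
      · by_cases hj : j = k
        · subst hj
          rw [if_pos rfl]
          simp only [Cterm, if_pos le_rfl, Nat.sub_self, qBinom_zero_right,
            show 0 + j - j = 0 from by omega, Finset.range_zero, Finset.prod_empty,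
            sub_self, mul_zero, Real.rpow_zero]
          ring
        · rw [if_neg hj]
          simp only [Cterm, if_pos hjk]
          rw [qBinom_eq_zero _ (show 0 < k - j from by omega)]
          ring
      · rw [if_neg (by omega)]
        simp only [Cterm, if_neg hjk]
        ring
    rw [Finset.sum_congr rfl hdiag, Finset.sum_ite_eq' (Finset.range (m+1)) k]
    by_cases hk : k ≤ m
    · rw [if_pos (Finset.mem_range.mpr (by omega))]
      have : genStirlingCD c 0 s q 0 0 = 1 := rfl
      rw [this, mul_one]
    · rw [if_neg (by simp [Finset.mem_range]; omega), gen_eq_zero c d s q (show m < k from by omega)]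
      ring
  | succ n ih =>
    rw [show n+1+m = (n+m)+1 from by omega]
    cases k with
    | zero =>
      rw [gen_zero_left]
      symm
      apply Finset.sum_eq_zero
      intro r _
      have hz : ∀ j ∈ Finset.range (m+1), Cterm q s c d m 0 r j = 0 := by
        intro j _
        rcases Nat.eq_zero_or_pos j with h0 | h0
        · subst h0
          obtain ⟨m', rfl⟩ : ∃ m', m = m' + 1 := ⟨m - 1, by omega⟩
          simp only [Cterm, gen_zero_left, zero_mul]
        · simp only [Cterm, if_neg (show ¬ (j ≤ 0) from by omega), mul_zero, zero_mul]
      rw [Finset.sum_eq_zero hz, zero_mul]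
    | succ k' =>
      rw [gen_succ, ih k', ih (k'+1)]
      have hcast : ((n+m:ℕ):ℝ) = (n:ℝ) + (m:ℝ) := by push_cast; ring
      rw [hcast]
      rw [abel_step q s c n (fun r => ∑ j ∈ Finset.range (m+1), Cterm q s c d m (k'+1) r j)]
      rw [Finset.mul_sum, Finset.mul_sum, ← Finset.sum_add_distrib]
      apply Finset.sum_congr rfl
      intro r _
      have hkey : (∑ j ∈ Finset.range (m+1), Cterm q s c d m (k'+1) (r+1) j)
            * q ^ (c*(n:ℝ) + ((n:ℝ)-(r:ℝ))*(s-1))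
          + (∑ j ∈ Finset.range (m+1), Cterm q s c d m (k'+1) r j)
            * qBracket q (c*(n:ℝ) + ((n:ℝ)-(r:ℝ))*(s-1))
          = q ^ (c*((n:ℝ)+(m:ℝ)) + d + (((n:ℝ)+(m:ℝ))-(k':ℝ))*(s-1))
              * (∑ j ∈ Finset.range (m+1), Cterm q s c d m k' r j)
            + qBracket q (c*((n:ℝ)+(m:ℝ)) + d + (((n:ℝ)+(m:ℝ))-(k':ℝ)-1)*(s-1))
              * (∑ j ∈ Finset.range (m+1), Cterm q s c d m (k'+1) r j) := by
        rw [Finset.sum_mul, Finset.sum_mul, ← Finset.sum_add_distrib,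
          Finset.mul_sum, Finset.mul_sum, ← Finset.sum_add_distrib]
        apply Finset.sum_congr rfl
        intro j _
        exact key_term q s c d hq m n r j k'
      rw [hkey]
      ring


/-- Spivey-type convolution for the numbers `S^{c,d}_{s,q}[n,k]`, second form. -/
theorem spivey_cd_second (q s c d : ℝ) (hq : 0 < q) (hq1 : q ≠ 1) (n k m : ℕ) (hm : 1 ≤ m) :
    genStirlingCD c d s q (n + m) k
    = ∑ r ∈ Finset.range (n + 1), ∑ j ∈ Finset.range (m + 1),
        genStirlingCD c d s q m j *
          q ^ ((d + (m : ℝ) * c + ((m : ℝ) - (j : ℝ)) * (s - 1)) * ((k : ℝ) - (j : ℝ))) *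
          (if j ≤ k then qBinom (q ^ (s - 1)) r (k - j) else 0) *
          genStirlingCD c 0 s q n r *
          ∏ i ∈ Finset.range (r + j - k),
            qBracket q (d + (m : ℝ) * c + ((m : ℝ) - (j : ℝ)) * (s - 1)
              + (i : ℝ) * (s - 1)) := by
  rw [aux_spivey q s c d hq hq1 m hm n k]
  apply Finset.sum_congr rfl
  intro r _
  rw [Finset.sum_mul]
  apply Finset.sum_congr rfl
  intro j _
  simp only [Cterm]
  ring
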